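/- Let q be a prime power, m ≥ 2, n = (q^m − q)/(q−1), and λ ∈ {1,...,q}. Then there exists a λ-fold 1-packing with minimum distance at least 2 in H(n,q) of size exactly λq^n/(n(q−1)+q), and no larger such packing exists; i.e., the maximum size of a λ-fold 1-packing with minimum distance ≥ 2 in H(n,q) is λq^n/(nq−n+q). -/

import Mathlib

open Finset Complex



section Chars
variable {q : ℕ} [NeZero q] (ψ : AddChar (ZMod q) ℂ)

lemma psi_norm (x : ZMod q) : ‖ψ x‖ = 1 := by
  have h : ψ x ^ q = 1 := by
    rw [← AddChar.map_nsmul_eq_pow]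
    have : (q : ℕ) • x = 0 := by
      simp [nsmul_eq_mul, ZMod.natCast_self]
    rw [this, AddChar.map_zero_eq_one]
  exact Complex.norm_eq_one_of_pow_eq_one h (NeZero.ne q)

lemma psi_conj (x : ZMod q) : (starRingEnd ℂ) (ψ x) = ψ (-x) := by
  have h1 : ψ x * ψ (-x) = 1 := by
    rw [← AddChar.map_add_eq_mul, add_neg_cancel, AddChar.map_zero_eq_one]
  have h2 : ψ x * (starRingEnd ℂ) (ψ x) = 1 := by
    rw [Complex.mul_conj]
    have := psi_norm ψ x
    norm_cast
    rw [Complex.normSq_eq_norm_sq, this, one_pow]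
  have hx : ψ x ≠ 0 := by
    intro h0; rw [h0, zero_mul] at h1; exact one_ne_zero h1.symm
  field_simp at h1 h2
  rw [← h1] at h2
  exact mul_left_cancel₀ hx h2 |>.symm ▸ rfl

lemma psi_sum (hψ : ψ.IsPrimitive) (u : ZMod q) :
    ∑ t : ZMod q, ψ (t * u) = if u = 0 then (q : ℂ) else 0 := by
  split_ifs with h
  · simp [h, ZMod.card]
  · have : ∑ t : ZMod q, ψ (t * u) = ∑ t : ZMod q, (ψ.mulShift u) t := by
      simp [AddChar.mulShift_apply, mul_comm]
    rw [this, AddChar.sum_eq_zero_of_ne_one (hψ h)]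

variable {n : ℕ}

/-- The character pairing on `(ZMod q)^n`. -/
noncomputable def chi (ψ : AddChar (ZMod q) ℂ) (a v : Fin n → ZMod q) : ℂ :=
  ∏ i, ψ (a i * v i)

lemma chi_add (a v w : Fin n → ZMod q) : chi ψ a (v + w) = chi ψ a v * chi ψ a w := by
  rw [chi, chi, chi, ← Finset.prod_mul_distrib]
  exact Finset.prod_congr rfl fun i _ => by
    rw [Pi.add_apply, mul_add, AddChar.map_add_eq_mul]

lemma chi_conj (a v : Fin n → ZMod q) : (starRingEnd ℂ) (chi ψ a v) = chi ψ a (-v) := by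
  rw [chi, chi, map_prod]
  exact Finset.prod_congr rfl fun i _ => by
    rw [psi_conj, Pi.neg_apply, mul_neg]

lemma chi_zero (a : Fin n → ZMod q) : chi ψ a 0 = 1 := by
  simp [chi]

lemma chi_sum (hψ : ψ.IsPrimitive) (u : Fin n → ZMod q) :
    ∑ a : Fin n → ZMod q, chi ψ a u = if u = 0 then ((q : ℂ) ^ n) else 0 := by
  have : ∑ a : Fin n → ZMod q, chi ψ a u
      = ∏ i, ∑ t : ZMod q, ψ (t * u i) := by
    rw [Fintype.prod_sum (fun i t => ψ (t * u i))]
    rfl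
  rw [this]
  split_ifs with h
  · subst h; simp [psi_sum ψ hψ]
  · have : ∃ i, u i ≠ 0 := by
      by_contra hc
      push_neg at hc
      exact h (funext hc)
    obtain ⟨i, hi⟩ := this
    apply Finset.prod_eq_zero (Finset.mem_univ i)
    rw [psi_sum ψ hψ, if_neg hi]
end Chars


section Sphere
variable {K : Type*} [Fintype K] [DecidableEq K] {n : ℕ}

omit [Fintype K] in
lemma dist_update (c : Fin n → K) (i : Fin n) {t : K} (ht : t ≠ c i) :
    hammingDist (Function.update c i t) c = 1 := by
  have h : (univ.filter fun j => Function.update c i t j ≠ c j) = {i} := by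
    ext j
    simp only [mem_filter, mem_univ, true_and, mem_singleton]
    constructor
    · intro hj
      by_contra hji
      rw [Function.update_of_ne hji] at hj
      exact hj rfl
    · rintro rfl
      rw [Function.update_self]
      exact ht
  simp only [hammingDist]
  rw [show ({j | Function.update c i t j ≠ c j} : Finset (Fin n))
      = univ.filter fun j => Function.update c i t j ≠ c j by rfl, h, card_singleton]

lemma sum_sphere {M : Type*} [AddCommMonoid M] (c : Fin n → K) (φ : (Fin n → K) → M) :
    ∑ v ∈ univ.filter (fun v => hammingDist v c = 1), φ v
      = ∑ i : Fin n, ∑ t ∈ univ.erase (c i), φ (Function.update c i t) := by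
  rw [← Finset.sum_sigma (univ : Finset (Fin n)) (fun i => univ.erase (c i))
      (fun p => φ (Function.update c p.1 p.2))]
  refine (Finset.sum_bij (fun p _ => Function.update c p.1 p.2) ?_ ?_ ?_ ?_).symm
  · rintro ⟨i, t⟩ hp
    simp only [mem_sigma, mem_univ, true_and, mem_erase] at hp
    simp only [mem_filter, mem_univ, true_and]
    exact dist_update c i hp.1
  · rintro ⟨i, t⟩ hp ⟨i', t'⟩ hp' h
    simp only [mem_sigma, mem_univ, true_and, mem_erase] at hp hp'
    dsimp only at h
    have hii : i = i' := by
      by_contra hne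
      have h1 := congrFun h i
      rw [Function.update_self, Function.update_of_ne hne] at h1
      exact hp.1 h1
    subst hii
    have : t = t' := by
      have := congrFun h i
      rwa [Function.update_self, Function.update_self] at this
    subst this; rfl
  · intro v hv
    simp only [mem_filter, mem_univ, true_and, hammingDist] at hv
    obtain ⟨i0, hi0⟩ := Finset.card_eq_one.mp hv
    have hmem : ∀ j, v j ≠ c j ↔ j = i0 := by
      intro j
      constructor
      · intro hj
        have : j ∈ ({j | v j ≠ c j} : Finset (Fin n)) := by
          simpa using hj
        rw [hi0] at this; simpa using this
      · intro hj
        rw [hj]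
        have : i0 ∈ ({j | v j ≠ c j} : Finset (Fin n)) := by
          rw [hi0]; simp
        simpa using this
    refine ⟨⟨i0, v i0⟩, ?_, ?_⟩
    · simp only [mem_sigma, mem_univ, true_and, mem_erase, and_true]
      exact (hmem i0).mpr rfl
    · funext j
      dsimp only
      rcases eq_or_ne j i0 with rfl | hji
      · rw [Function.update_self]
      · rw [Function.update_of_ne hji]
        by_contra hne
        exact hji ((hmem j).mp (Ne.symm hne))
  · intros; rfl

lemma sphere_card (c : Fin n → K) :
    (univ.filter fun v => hammingDist v c = 1).card = n * (Fintype.card K - 1) := by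
  have h := sum_sphere (M := ℕ) c (fun _ => 1)
  simp only [Finset.sum_const, smul_eq_mul, mul_one] at h
  rw [Finset.card_filter] at h ⊢
  · rw [h]
    have : ∀ i : Fin n, (univ.erase (c i)).card = Fintype.card K - 1 := by
      intro i
      rw [Finset.card_erase_of_mem (mem_univ _), Finset.card_univ]
    simp only [this, Finset.sum_const, Finset.card_univ, Fintype.card_fin, smul_eq_mul]

omit [Fintype K] in
lemma wt_neg [AddGroup K] (x : Fin n → K) : hammingNorm (-x) = hammingNorm x := by
  simp [hammingNorm, neg_ne_zero]

lemma hammingDist_eq_hammingNorm_sub' [AddGroup K] (x y : Fin n → K) :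
    hammingDist x y = hammingNorm (x - y) := by
  simp only [hammingDist, hammingNorm, Pi.sub_apply, ne_eq, sub_eq_zero]
end Sphere

section Gamma
variable {q n : ℕ} [NeZero q] (ψ : AddChar (ZMod q) ℂ)

lemma gamma_sum (hψ : ψ.IsPrimitive) (a : Fin n → ZMod q) :
    ∑ v ∈ univ.filter (fun v : Fin n → ZMod q => hammingDist v 0 = 1), chi ψ a v
      = (((n : ℤ) * q - n - q * (hammingNorm a) : ℤ) : ℂ) := by
  rw [sum_sphere (0 : Fin n → ZMod q) (chi ψ a)]
  have h1 : ∀ (i : Fin n) (t : ZMod q), chi ψ a (Function.update 0 i t) = ψ (a i * t) := by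
    intro i t
    rw [chi]
    rw [Finset.prod_eq_single i]
    · rw [Function.update_self]
    · intro j _ hj
      rw [Function.update_of_ne hj, Pi.zero_apply, mul_zero, AddChar.map_zero_eq_one]
    · intro h; exact absurd (mem_univ i) h
  have h2 : ∀ i : Fin n, ∑ t ∈ univ.erase ((0 : Fin n → ZMod q) i), chi ψ a (Function.update 0 i t)
      = (if a i = 0 then (q : ℂ) else 0) - 1 := by
    intro i
    simp only [Pi.zero_apply]
    rw [Finset.sum_erase_eq_sub (mem_univ (0 : ZMod q))]
    simp only [h1]
    congr 1
    · rw [← psi_sum ψ hψ (a i)]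
      exact Finset.sum_congr rfl fun t _ => by rw [mul_comm]
    · rw [mul_zero, AddChar.map_zero_eq_one]
  calc ∑ i : Fin n, ∑ t ∈ univ.erase ((0 : Fin n → ZMod q) i), chi ψ a (Function.update 0 i t)
      = ∑ i : Fin n, ((if a i = 0 then (q : ℂ) else 0) - 1) := Finset.sum_congr rfl fun i _ => h2 i
    _ = (q : ℂ) * (univ.filter fun i => a i = 0).card - n := by
        rw [Finset.sum_sub_distrib]
        congr 1
        · rw [Finset.sum_ite, Finset.sum_const, Finset.sum_const]
          simp [mul_comm]
        · simp
    _ = (((n : ℤ) * q - n - q * (hammingNorm a) : ℤ) : ℂ) := by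
        have hc : (univ.filter fun i => a i = 0).card = n - hammingNorm a := by
          have h3 : (univ.filter fun i => a i = 0).card + (univ.filter fun i => ¬ a i = 0).card
              = n := by
            rw [Finset.card_filter_add_card_filter_not]
            simp
          have h4 : hammingNorm a = (univ.filter fun i => ¬ a i = 0).card := by
            simp [hammingNorm]
          omega
        have hle : hammingNorm a ≤ n := by
          have := hammingNorm_le_card_fintype (x := a)
          simpa using this
        rw [hc]
        push_cast [Nat.cast_sub hle]
        ring
end Gamma

section Main
set_option maxHeartbeats 1000000 in

theorem upper_bound_zmod {q m n lam : ℕ} (hq2 : 2 ≤ q) (hm : 2 ≤ m)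
    (hQ : n * q + q = q ^ m + n) (hn1 : 1 ≤ n) (hlam : 1 ≤ lam)
    (C : Finset (Fin n → ZMod q))
    (hd : ∀ x ∈ C, ∀ y ∈ C, x ≠ y → 2 ≤ hammingDist x y)
    (hcov : ∀ v : Fin n → ZMod q, (C.filter (fun c => hammingDist v c ≤ 1)).card ≤ lam) :
    C.card * q ^ m ≤ lam * q ^ n := by
  haveI : NeZero q := ⟨by omega⟩
  have hζ : IsPrimitiveRoot (Complex.exp (2 * Real.pi * Complex.I / q)) q :=
    Complex.isPrimitiveRoot_exp q (by omega)
  set ψ : AddChar (ZMod q) ℂ :=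
    AddChar.zmodChar q ((IsPrimitiveRoot.iff_def _ q).mp hζ).left with hψdef
  have hψ : ψ.IsPrimitive := AddChar.zmodChar_primitive_of_primitive_root q hζ
  -- main objects
  set S : (Fin n → ZMod q) → ℂ := fun a => ∑ c ∈ C, chi ψ a c with hS
  set γ : (Fin n → ZMod q) → ℤ := fun a => (n : ℤ) * q - n - q * hammingNorm a with hγ
  set W : (Fin n → ZMod q) → ℝ := fun a => ((γ a * (γ a + q) : ℤ) : ℝ) with hW
  set g : (Fin n → ZMod q) → ℕ := fun v => (C.filter fun c => hammingDist v c = 1).card with hg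
  set M : ℝ := ∑ a : Fin n → ZMod q, W a * Complex.normSq (S a) with hM
  set Sph : Finset (Fin n → ZMod q) :=
    univ.filter (fun v => hammingDist v (0 : Fin n → ZMod q) = 1) with hSph
  -- nonnegativity of weights
  have hnq : (n : ℤ) * q - n = (q : ℤ) ^ m - q := by
    have h0 : (n : ℤ) * q + q = (q : ℤ) ^ m + n := by exact_mod_cast hQ
    linarith
  have hWpos : ∀ a, 0 ≤ W a := by
    intro a
    have hqm : (q : ℤ) ^ m = q * q ^ (m - 1) := by
      rw [← pow_succ']
      congr 1
      omega
    have hγa : γ a = q * ((q : ℤ) ^ (m - 1) - 1 - hammingNorm a) := by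
      rw [hγ]
      dsimp only
      rw [hnq, hqm]
      ring
    set d : ℤ := (q : ℤ) ^ (m - 1) - 1 - hammingNorm a with hdd
    have : (γ a * (γ a + q) : ℤ) = q ^ 2 * (d * (d + 1)) := by rw [hγa]; ring
    rw [hW]
    dsimp only
    rw [this]
    push_cast
    have hd01 : (0 : ℝ) ≤ (d : ℝ) * ((d : ℝ) + 1) := by
      rcases le_or_gt 0 (d : ℝ) with h | h
      · nlinarith
      · have hd1 : (d : ℝ) ≤ -1 := by
          have h1 : d < 0 := by exact_mod_cast h
          have h2 : d ≤ -1 := by omega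
          exact_mod_cast h2
        nlinarith
    exact mul_nonneg (by positivity) hd01
  -- value at 0
  have hS0 : S 0 = (C.card : ℂ) := by
    rw [hS]
    dsimp only
    rw [show (∑ c ∈ C, chi ψ 0 c) = ∑ c ∈ C, 1 from
      Finset.sum_congr rfl fun c _ => by simp [chi]]
    simp
  have hγ0 : γ 0 = (n : ℤ) * q - n := by
    rw [hγ]; simp
  -- lower bound for M
  have hMlow : W 0 * ((C.card : ℝ) * (C.card : ℝ)) ≤ M := by
    have h1 : W 0 * Complex.normSq (S 0) ≤ M := by
      rw [hM]
      refine Finset.single_le_sum (f := fun a => W a * Complex.normSq (S a)) ?_ (mem_univ 0)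
      intro a _
      exact mul_nonneg (hWpos a) (Complex.normSq_nonneg _)
    have h2 : Complex.normSq (S 0) = (C.card : ℝ) * (C.card : ℝ) := by
      rw [hS0]
      rw [show ((C.card : ℂ)) = (((C.card : ℝ)) : ℂ) by push_cast; ring]
      rw [Complex.normSq_ofReal]
    rwa [h2] at h1
  -- the R computation
  have hchi0 : ∀ (w : Fin n → ZMod q), ∑ a : Fin n → ZMod q, chi ψ a w
      = if w = 0 then ((q : ℂ) ^ n) else 0 := chi_sum ψ hψ
  have hR : ∀ u : Fin n → ZMod q,
      (∑ a : Fin n → ZMod q, (W a : ℂ) * chi ψ a u)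
        = (q : ℂ) ^ n * ((((Sph ×ˢ Sph).filter fun p => p.1 + p.2 + u = 0).card : ℂ)
            + q * (if hammingNorm u = 1 then 1 else 0)) := by
    intro u
    have hWc : ∀ a, ((W a : ℝ) : ℂ)
        = (∑ x ∈ Sph, chi ψ a x) ^ 2 + q * (∑ x ∈ Sph, chi ψ a x) := by
      intro a
      have hgs := gamma_sum ψ hψ a
      rw [hSph]
      rw [hgs]
      rw [hW, hγ]
      dsimp only
      push_cast
      ring
    calc (∑ a : Fin n → ZMod q, (W a : ℂ) * chi ψ a u)
        = ∑ a : Fin n → ZMod q,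
            ((∑ p ∈ Sph ×ˢ Sph, chi ψ a (p.1 + p.2 + u)) + q * ∑ x ∈ Sph, chi ψ a (x + u)) := by
          refine Finset.sum_congr rfl fun a _ => ?_
          rw [hWc a, add_mul, sq, Finset.sum_mul_sum, ← Finset.sum_product']
          congr 1
          · rw [Finset.sum_mul]
            refine Finset.sum_congr rfl fun p _ => ?_
            rw [chi_add, chi_add]
          · rw [mul_assoc, Finset.sum_mul]
            congr 1
            refine Finset.sum_congr rfl fun x _ => (chi_add ψ a x u).symm
      _ = (∑ p ∈ Sph ×ˢ Sph, ∑ a : Fin n → ZMod q, chi ψ a (p.1 + p.2 + u))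
            + q * ∑ x ∈ Sph, ∑ a : Fin n → ZMod q, chi ψ a (x + u) := by
          rw [Finset.sum_add_distrib, Finset.sum_comm]
          congr 1
          rw [← Finset.mul_sum, Finset.sum_comm]
      _ = (∑ p ∈ Sph ×ˢ Sph, if p.1 + p.2 + u = 0 then ((q:ℂ))^n else 0)
            + q * ∑ x ∈ Sph, if x + u = 0 then ((q:ℂ))^n else 0 := by
          rw [Finset.sum_congr rfl fun p _ => hchi0 _]
          rw [Finset.sum_congr rfl fun x _ => hchi0 _]
      _ = (q : ℂ) ^ n * ((((Sph ×ˢ Sph).filter fun p => p.1 + p.2 + u = 0).card : ℂ)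
            + q * (if hammingNorm u = 1 then 1 else 0)) := by
          have e1 : (∑ p ∈ Sph ×ˢ Sph, if p.1 + p.2 + u = 0 then ((q:ℂ))^n else 0)
              = (((Sph ×ˢ Sph).filter fun p => p.1 + p.2 + u = 0).card : ℂ) * (q:ℂ)^n := by
            rw [← Finset.sum_filter]
            rw [Finset.sum_const]
            simp [mul_comm]
          have e2 : (∑ x ∈ Sph, if x + u = 0 then ((q:ℂ))^n else 0)
              = if hammingNorm u = 1 then ((q:ℂ))^n else 0 := by
            have : ∀ x, (x + u = 0) ↔ (x = -u) := by
              intro x; constructor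
              · intro h; linear_combination h
              · intro h; rw [h]; ring
            rw [Finset.sum_congr rfl fun x _ => by rw [if_congr (this x) rfl rfl]]
            rw [Finset.sum_ite_eq' Sph (-u) (fun _ => ((q:ℂ))^n)]
            congr 1
            rw [hSph]
            simp only [mem_filter, mem_univ, true_and]
            rw [hammingDist_eq_hammingNorm_sub']
            rw [sub_zero, wt_neg]
          rw [e1, e2]
          split_ifs with h <;> ring

  -- conjugate of S
  have hconj : ∀ a, (starRingEnd ℂ) (S a) = ∑ c ∈ C, chi ψ a (-c) := by
    intro a
    rw [hS]
    dsimp only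
    rw [map_sum]
    exact Finset.sum_congr rfl fun c _ => chi_conj ψ a c
  have hSS : ∀ a, S a * (starRingEnd ℂ) (S a) = ∑ p ∈ C ×ˢ C, chi ψ a (p.1 - p.2) := by
    intro a
    rw [hconj a, hS]
    dsimp only
    rw [Finset.sum_mul_sum, ← Finset.sum_product']
    refine Finset.sum_congr rfl fun p _ => ?_
    rw [sub_eq_add_neg, chi_add]
  -- main identity for M, complex side
  have hMC : (M : ℂ) = (q:ℂ)^n * ∑ p ∈ C ×ˢ C,
      ((((Sph ×ˢ Sph).filter fun r => r.1 + r.2 + (p.1 - p.2) = 0).card : ℂ)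
        + q * (if hammingNorm (p.1 - p.2) = 1 then 1 else 0)) := by
    calc ((M : ℝ) : ℂ) = ∑ a : Fin n → ZMod q, (W a : ℂ) * (S a * (starRingEnd ℂ) (S a)) := by
          rw [hM]
          push_cast
          refine Finset.sum_congr rfl fun a _ => ?_
          rw [Complex.mul_conj]
      _ = ∑ a : Fin n → ZMod q, ∑ p ∈ C ×ˢ C, (W a : ℂ) * chi ψ a (p.1 - p.2) := by
          refine Finset.sum_congr rfl fun a _ => ?_
          rw [hSS a, Finset.mul_sum]
      _ = ∑ p ∈ C ×ˢ C, ∑ a : Fin n → ZMod q, (W a : ℂ) * chi ψ a (p.1 - p.2) :=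
          Finset.sum_comm
      _ = ∑ p ∈ C ×ˢ C, (q:ℂ)^n *
            ((((Sph ×ˢ Sph).filter fun r => r.1 + r.2 + (p.1 - p.2) = 0).card : ℂ)
              + q * (if hammingNorm (p.1 - p.2) = 1 then 1 else 0)) :=
          Finset.sum_congr rfl fun p _ => hR _
      _ = _ := by rw [← Finset.mul_sum]
  -- the if-term vanishes on C × C
  have hite : ∀ p ∈ C ×ˢ C, (if hammingNorm (p.1 - p.2) = 1 then (1:ℂ) else 0) = 0 := by
    rintro ⟨c, c'⟩ hp
    rw [Finset.mem_product] at hp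
    have hne1 : hammingNorm (c - c') ≠ 1 := by
      rcases eq_or_ne c c' with rfl | hne
      · rw [sub_self, hammingNorm_zero]
        omega
      · have h2 := hd c hp.1 c' hp.2 hne
        rw [hammingDist_eq_hammingNorm_sub'] at h2
        omega
    rw [if_neg hne1]
  -- counting: N(c-c') = number of common neighbours
  have hNcard : ∀ c c' : Fin n → ZMod q,
      ((Sph ×ˢ Sph).filter fun r => r.1 + r.2 + (c - c') = 0).card
        = (univ.filter fun v => hammingDist v c = 1 ∧ hammingDist v c' = 1).card := by
    intro c c'
    refine Finset.card_bij (fun r _ => r.1 + c) ?_ ?_ ?_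
    · rintro ⟨x, y⟩ hr
      rw [Finset.mem_filter, Finset.mem_product] at hr
      obtain ⟨⟨hx, hy⟩, hsum⟩ := hr
      rw [hSph, Finset.mem_filter] at hx hy
      have hx1 : hammingNorm x = 1 := by
        have := hx.2
        rwa [hammingDist_eq_hammingNorm_sub', sub_zero] at this
      have hy1 : hammingNorm y = 1 := by
        have := hy.2
        rwa [hammingDist_eq_hammingNorm_sub', sub_zero] at this
      rw [Finset.mem_filter]
      refine ⟨mem_univ _, ?_, ?_⟩
      · rw [hammingDist_eq_hammingNorm_sub', add_sub_cancel_right]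
        exact hx1
      · have hxy : x + c - c' = -y := by linear_combination hsum
        rw [hammingDist_eq_hammingNorm_sub', hxy, wt_neg]
        exact hy1
    · rintro ⟨x, y⟩ hr ⟨x', y'⟩ hr' h
      rw [Finset.mem_filter, Finset.mem_product] at hr hr'
      dsimp only at h
      have hx : x = x' := by
        have := h
        exact add_right_cancel this
      have hy : y = y' := by
        have h1 := hr.2
        have h2 := hr'.2
        rw [hx] at h1
        linear_combination h1 - h2
      rw [Prod.mk.injEq]
      exact ⟨hx, hy⟩
    · intro v hv
      rw [Finset.mem_filter] at hv
      obtain ⟨_, hv1, hv2⟩ := hv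
      refine ⟨⟨v - c, c' - v⟩, ?_, ?_⟩
      · rw [Finset.mem_filter, Finset.mem_product]
        refine ⟨⟨?_, ?_⟩, ?_⟩
        · rw [hSph, Finset.mem_filter]
          refine ⟨mem_univ _, ?_⟩
          rw [hammingDist_eq_hammingNorm_sub', sub_zero, ← hammingDist_eq_hammingNorm_sub']
          exact hv1
        · rw [hSph, Finset.mem_filter]
          refine ⟨mem_univ _, ?_⟩
          rw [hammingDist_eq_hammingNorm_sub', sub_zero, ← hammingDist_eq_hammingNorm_sub']
          rw [hammingDist_comm]
          exact hv2
        · ring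
      · dsimp only
        ring
  -- pure counting identity
  have hsum2 : ∑ p ∈ C ×ˢ C,
      (univ.filter fun v => hammingDist v p.1 = 1 ∧ hammingDist v p.2 = 1).card
      = ∑ v : Fin n → ZMod q, g v * g v := by
    calc ∑ p ∈ C ×ˢ C,
        (univ.filter fun v => hammingDist v p.1 = 1 ∧ hammingDist v p.2 = 1).card
        = ∑ p ∈ C ×ˢ C, ∑ v : Fin n → ZMod q,
            (if hammingDist v p.1 = 1 ∧ hammingDist v p.2 = 1 then 1 else 0) := by
          refine Finset.sum_congr rfl fun p _ => ?_
          rw [Finset.card_filter]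
      _ = ∑ v : Fin n → ZMod q, ∑ p ∈ C ×ˢ C,
            (if hammingDist v p.1 = 1 ∧ hammingDist v p.2 = 1 then 1 else 0) :=
          Finset.sum_comm
      _ = ∑ v : Fin n → ZMod q, g v * g v := by
          refine Finset.sum_congr rfl fun v _ => ?_
          have : ∑ p ∈ C ×ˢ C,
              (if hammingDist v p.1 = 1 ∧ hammingDist v p.2 = 1 then 1 else 0)
              = (∑ c ∈ C, if hammingDist v c = 1 then 1 else 0)
                * (∑ c' ∈ C, if hammingDist v c' = 1 then 1 else 0) := by
            rw [Finset.sum_mul_sum, ← Finset.sum_product']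
            refine Finset.sum_congr rfl fun p _ => ?_
            by_cases h1 : hammingDist v p.1 = 1 <;> by_cases h2 : hammingDist v p.2 = 1 <;>
              simp [h1, h2]
          rw [this, hg]
          dsimp only
          rw [Finset.card_filter]
      _ = ∑ v : Fin n → ZMod q, g v * g v := rfl
  -- M as a real sum of squares
  have hMr : M = (q:ℝ)^n * ∑ v : Fin n → ZMod q, (g v : ℝ) * (g v : ℝ) := by
    have hc : ((M : ℝ) : ℂ) = (((q:ℝ)^n * ∑ v : Fin n → ZMod q, (g v : ℝ) * (g v : ℝ) : ℝ) : ℂ) := by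
      rw [hMC]
      have e1 : ∑ p ∈ C ×ˢ C,
          ((((Sph ×ˢ Sph).filter fun r => r.1 + r.2 + (p.1 - p.2) = 0).card : ℂ)
            + q * (if hammingNorm (p.1 - p.2) = 1 then 1 else 0))
          = ((∑ v : Fin n → ZMod q, g v * g v : ℕ) : ℂ) := by
        rw [Finset.sum_congr rfl (fun p hp => by
          rw [hite p hp, mul_zero, add_zero, hNcard p.1 p.2])]
        rw [← hsum2]
        push_cast
        rfl
      rw [e1]
      push_cast
      ring
    exact Complex.ofReal_inj.mp hc
  -- coverage bounds
  have hglam : ∀ v, g v ≤ lam := by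
    intro v
    refine le_trans (Finset.card_le_card ?_) (hcov v)
    refine Finset.monotone_filter_right _ ?_
    intro c _ hc
    exact le_of_eq hc
  have hgsum : ∑ v : Fin n → ZMod q, g v = C.card * (n * (q - 1)) := by
    calc ∑ v : Fin n → ZMod q, g v
        = ∑ v : Fin n → ZMod q, ∑ c ∈ C, (if hammingDist v c = 1 then 1 else 0) := by
          refine Finset.sum_congr rfl fun v _ => ?_
          rw [hg]
          dsimp only
          rw [Finset.card_filter]
      _ = ∑ c ∈ C, ∑ v : Fin n → ZMod q, (if hammingDist v c = 1 then 1 else 0) :=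
          Finset.sum_comm
      _ = ∑ c ∈ C, (univ.filter fun v => hammingDist v c = 1).card := by
          refine Finset.sum_congr rfl fun c _ => ?_
          rw [Finset.card_filter]
      _ = ∑ c ∈ C, n * (q - 1) := by
          refine Finset.sum_congr rfl fun c _ => ?_
          rw [sphere_card c, ZMod.card]
      _ = C.card * (n * (q - 1)) := by
          rw [Finset.sum_const, smul_eq_mul]
  -- final numeric argument
  have hEcast : ((n * (q - 1) : ℕ) : ℝ) = (n:ℝ) * q - n := by
    have h1 : (1:ℕ) ≤ q := by omega
    push_cast [Nat.cast_sub h1]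
    ring
  have hW0 : W 0 = ((n:ℝ) * q - n) * (((n:ℝ) * q - n) + q) := by
    rw [hW]
    dsimp only
    rw [hγ0]
    push_cast
    ring
  have hupq : ∑ v : Fin n → ZMod q, (g v : ℝ) * (g v : ℝ)
      ≤ (lam : ℝ) * ((C.card : ℝ) * ((n:ℝ) * q - n)) := by
    have h1 : ∑ v : Fin n → ZMod q, (g v : ℝ) * (g v : ℝ)
        ≤ ∑ v : Fin n → ZMod q, (lam : ℝ) * (g v : ℝ) := by
      refine Finset.sum_le_sum fun v _ => ?_
      have h2 : (g v : ℝ) ≤ (lam : ℝ) := by exact_mod_cast hglam v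
      have h3 : (0:ℝ) ≤ (g v : ℝ) := Nat.cast_nonneg _
      exact mul_le_mul_of_nonneg_right h2 h3
    refine le_trans h1 ?_
    rw [← Finset.mul_sum]
    have h4 : (∑ v : Fin n → ZMod q, (g v : ℝ)) = (C.card : ℝ) * ((n:ℝ) * q - n) := by
      rw [← Nat.cast_sum, hgsum, Nat.cast_mul, hEcast]
    rw [h4]
  have hEpos : (0:ℝ) < (n:ℝ) * q - n := by
    have h1 : (1:ℝ) ≤ (n:ℝ) := by exact_mod_cast hn1
    have h2 : (2:ℝ) ≤ (q:ℝ) := by exact_mod_cast hq2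
    nlinarith
  have hqmE : ((n:ℝ) * q - n) + q = (q:ℝ)^m := by
    have h0 : (n:ℝ) * q + q = (q:ℝ)^m + n := by exact_mod_cast hQ
    linarith
  rcases Nat.eq_zero_or_pos C.card with h0 | hpos
  · rw [h0]
    simp
  · have hApos : (0:ℝ) < (C.card : ℝ) := by exact_mod_cast hpos
    set A : ℝ := (C.card : ℝ) with hA
    set E : ℝ := (n:ℝ) * q - n with hE
    have K : E * (E + q) * (A * A) ≤ (q:ℝ)^n * ((lam:ℝ) * (A * E)) := by
      have k1 : E * (E + q) * (A * A) ≤ M := by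
        have := hMlow
        rw [hW0] at this
        calc E * (E + q) * (A * A) = (E * (E + q)) * (A * A) := by ring
          _ ≤ M := this
      have k2 : M ≤ (q:ℝ)^n * ((lam:ℝ) * (A * E)) := by
        rw [hMr]
        exact mul_le_mul_of_nonneg_left hupq (by positivity)
      exact le_trans k1 k2
    have h2 : (E + q) * A ≤ (q:ℝ)^n * (lam:ℝ) := by
      have h3 : (E * A) * ((E + q) * A) ≤ (E * A) * ((q:ℝ)^n * (lam:ℝ)) := by nlinarith [K]
      exact le_of_mul_le_mul_left h3 (by positivity)
    have h5 : (C.card : ℝ) * (q:ℝ)^m ≤ (lam:ℝ) * (q:ℝ)^n := by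
      rw [← hqmE]
      calc (C.card : ℝ) * (E + q) = (E + q) * A := by rw [hA]; ring
        _ ≤ (q:ℝ)^n * (lam:ℝ) := h2
        _ = (lam:ℝ) * (q:ℝ)^n := by ring
    exact_mod_cast h5

end Main



theorem construction {F : Type*} [Field F] [Fintype F] [DecidableEq F] {q m n lam : ℕ}
    (hq : Fintype.card F = q) (hq2 : 2 ≤ q) (hm : 2 ≤ m) (hQ : n * q + q = q ^ m + n)
    (hlam1 : 1 ≤ lam) (hlamq : lam ≤ q) :
    ∃ C : Finset (Fin n → F),
      (∀ x ∈ C, ∀ y ∈ C, x ≠ y → 2 ≤ hammingDist x y) ∧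
      (∀ v : Fin n → F, (C.filter (fun c => hammingDist v c ≤ 1)).card ≤ lam) ∧
      C.card * q ^ m = lam * q ^ n := by
  classical
  -- monic vectors
  set Mon : Finset (Fin m → F) :=
    univ.filter (fun x => ∃ j, x j = 1 ∧ ∀ i, i < j → x i = 0) with hMon
  have hmem : ∀ r : Fin m → F, r ∈ Mon ↔ ∃ j, r j = 1 ∧ ∀ i, i < j → r i = 0 := by
    intro r; rw [hMon, Finset.mem_filter]; simp
  have hMon0 : ∀ r ∈ Mon, r ≠ 0 := by
    intro r hr h0
    obtain ⟨j, hj1, -⟩ := (hmem r).mp hr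
    rw [h0] at hj1
    simp at hj1
  -- uniqueness of monic scaling
  have L1 : ∀ r ∈ Mon, ∀ r' ∈ Mon, ∀ s : F, r = s • r' → r = r' := by
    intro r hr r' hr' s hs
    obtain ⟨j, hj1, hj0⟩ := (hmem r).mp hr
    obtain ⟨j', hj1', hj0'⟩ := (hmem r').mp hr'
    rcases lt_trichotomy j j' with h | h | h
    · exfalso
      have : r j = s * r' j := by rw [hs]; rfl
      rw [hj0' j h, mul_zero] at this
      rw [hj1] at this
      exact one_ne_zero this
    · have hs1 : s = 1 := by
        have : r j = s * r' j := by rw [hs]; rfl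
        rw [hj1, h, hj1', mul_one] at this
        exact this.symm
      rw [hs, hs1, one_smul]
    · exfalso
      have h1 : r j' = s * r' j' := by rw [hs]; rfl
      rw [hj0 j' h, hj1', mul_one] at h1
      have h2 : r j = s * r' j := by rw [hs]; rfl
      rw [hj1, ← h1, zero_mul] at h2
      exact one_ne_zero h2
  -- normalization
  have L2 : ∀ x : Fin m → F, x ≠ 0 → ∃ s : F, s ≠ 0 ∧ ∃ r ∈ Mon, x = s • r := by
    intro x hx
    have hex : ∃ i, x i ≠ 0 := by
      by_contra hc
      push_neg at hc
      exact hx (funext hc)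
    have hT : (univ.filter fun i => x i ≠ 0).Nonempty := by
      rcases hex with ⟨i, hi⟩
      exact ⟨i, by simp [hi]⟩
    set j := (univ.filter fun i => x i ≠ 0).min' hT with hj
    have hjmem : j ∈ univ.filter fun i => x i ≠ 0 := Finset.min'_mem _ hT
    have hxj : x j ≠ 0 := by
      simpa using hjmem
    refine ⟨x j, hxj, (x j)⁻¹ • x, ?_, ?_⟩
    · rw [hmem]
      refine ⟨j, ?_, ?_⟩
      · simp [inv_mul_cancel₀ hxj]
      · intro i hi
        have hxi : x i = 0 := by
          by_contra hxi
          have : j ≤ i := Finset.min'_le _ i (by simp [hxi])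
          omega
        simp [hxi]
    · rw [smul_smul, mul_inv_cancel₀ hxj, one_smul]
  -- cardinality of Mon
  have hcardMon : Mon.card = n + 1 := by
    have hbij : ((univ.erase (0:F)) ×ˢ Mon).card = (univ.erase (0 : Fin m → F)).card := by
      refine Finset.card_bij (fun p _ => p.1 • p.2) ?_ ?_ ?_
      · rintro ⟨s, r⟩ hp
        rw [Finset.mem_product, Finset.mem_erase] at hp
        rw [Finset.mem_erase]
        refine ⟨?_, mem_univ _⟩
        intro h0
        have : r = 0 := by
          funext i
          have := congrFun h0 i
          simp only [Pi.smul_apply, smul_eq_mul, Pi.zero_apply] at this ⊢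
          rcases mul_eq_zero.mp this with h | h
          · exact absurd h hp.1.1
          · exact h
        exact hMon0 r hp.2 this
      · rintro ⟨s, r⟩ hp ⟨s', r'⟩ hp' h
        rw [Finset.mem_product, Finset.mem_erase] at hp hp'
        dsimp only at h
        have hrr : r = r' := by
          have : r = (s⁻¹ * s') • r' := by
            rw [mul_smul, ← h, smul_smul, inv_mul_cancel₀ hp.1.1, one_smul]
          exact L1 r hp.2 r' hp'.2 _ this
        subst hrr
        have hss : s = s' := by
          obtain ⟨j, hj1, -⟩ := (hmem r).mp hp.2
          have := congrFun h j
          simp only [Pi.smul_apply, smul_eq_mul, hj1, mul_one] at this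
          exact this
        rw [hss]
      · intro x hx
        rw [Finset.mem_erase] at hx
        obtain ⟨s, hs, r, hr, hxr⟩ := L2 x hx.1
        exact ⟨⟨s, r⟩, by
          rw [Finset.mem_product, Finset.mem_erase]
          exact ⟨⟨hs, mem_univ _⟩, hr⟩, hxr.symm⟩
    rw [Finset.card_product, Finset.card_erase_of_mem (mem_univ _),
      Finset.card_erase_of_mem (mem_univ _), Finset.card_univ, Finset.card_univ, hq,
      Fintype.card_pi] at hbij
    simp only [hq, Finset.prod_const, Finset.card_univ, Fintype.card_fin] at hbij
    -- hbij : (q - 1) * Mon.card = q ^ m - 1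
    have hq1 : (1:ℕ) ≤ q := by omega
    have hqm1 : (1:ℕ) ≤ q ^ m := Nat.one_le_pow _ _ (by omega)
    have hZ : ((q:ℤ) - 1) * Mon.card = (q:ℤ) ^ m - 1 := by
      have h' := congrArg (fun t : ℕ => (t : ℤ)) hbij
      push_cast [Nat.cast_sub hq1, Nat.cast_sub hqm1] at h'
      exact_mod_cast h'
    have hZ2 : ((q:ℤ) - 1) * n = (q:ℤ) ^ m - q := by
      have h0 : (n:ℤ) * q + q = (q:ℤ) ^ m + n := by exact_mod_cast hQ
      linarith
    have hq1' : ((q:ℤ) - 1) ≠ 0 := by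
      have : (2:ℤ) ≤ (q:ℤ) := by exact_mod_cast hq2
      omega
    have : ((q:ℤ) - 1) * Mon.card = ((q:ℤ) - 1) * (n + 1) := by
      rw [hZ]
      linarith
    have := mul_left_cancel₀ hq1' this
    exact_mod_cast this
  -- the special monic vector and the columns
  have hm1 : m - 1 < m := by omega
  set lst : Fin m := ⟨m - 1, hm1⟩ with hlst
  set elast : Fin m → F := Pi.single lst 1 with helastdef
  have hlst0 : (⟨0, by omega⟩ : Fin m) ≠ lst := by
    intro hcon
    have := congrArg Fin.val hcon
    simp only [hlst] at this
    omega
  have helast : elast ∈ Mon := by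
    rw [hmem]
    refine ⟨lst, by simp [helastdef], ?_⟩
    intro i hi
    rw [helastdef, Pi.single_eq_of_ne (Fin.ne_of_lt hi)]
  set MonE : Finset (Fin m → F) := Mon.erase elast with hMonE
  have hcardE : MonE.card = n := by
    rw [hMonE, Finset.card_erase_of_mem helast, hcardMon]
    omega
  set eqv : Fin n ≃ {x // x ∈ MonE} := ((MonE.equivFin).trans (finCongr hcardE)).symm with heqv
  set h : Fin n → (Fin m → F) := fun i => (eqv i : Fin m → F) with hhdef
  have hhE : ∀ i, h i ∈ MonE := fun i => (eqv i).2
  have hhMon : ∀ i, h i ∈ Mon := fun i => Finset.mem_of_mem_erase (hhE i)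
  have hhne : ∀ i, h i ≠ elast := fun i => Finset.ne_of_mem_erase (hhE i)
  have hhinj : Function.Injective h := fun i j hij => eqv.injective (Subtype.ext hij)
  have hh0 : ∀ i, h i ≠ 0 := fun i => hMon0 _ (hhMon i)
  -- the linear map
  set Hl : (Fin n → F) →ₗ[F] (Fin m → F) :=
    { toFun := fun x => ∑ i, x i • h i,
      map_add' := fun x y => by
        simp only [Pi.add_apply, add_smul]
        rw [Finset.sum_add_distrib],
      map_smul' := fun c x => by
        simp only [Pi.smul_apply, smul_eq_mul, RingHom.id_apply]
        rw [Finset.smul_sum]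
        exact Finset.sum_congr rfl fun i _ => by rw [smul_smul] } with hHldef
  have hHlapply : ∀ x : Fin n → F, Hl x = ∑ i, x i • h i := fun x => rfl
  have hsingle : ∀ (i0 : Fin n) (t : F), Hl (Pi.single i0 t) = t • h i0 := by
    intro i0 t
    rw [hHlapply]
    rw [Finset.sum_eq_single i0]
    · rw [Pi.single_eq_same]
    · intro j _ hj
      rw [Pi.single_eq_of_ne hj, zero_smul]
    · intro hmm
      exact absurd (mem_univ _) hmm
  have hrange : ∀ r ∈ MonE, r ∈ LinearMap.range Hl := by
    intro r hr
    refine ⟨Pi.single (eqv.symm ⟨r, hr⟩) 1, ?_⟩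
    rw [hsingle, one_smul, hhdef]
    exact congrArg Subtype.val (eqv.apply_symm_apply ⟨r, hr⟩)
  have hsurj : Function.Surjective Hl := by
    have hmem1 : ∀ j : Fin m, (Pi.single j (1:F) : Fin m → F) ∈ LinearMap.range Hl := by
      intro j
      set e1 : Fin m → F := Pi.single (⟨0, by omega⟩ : Fin m) 1 with he1
      have he1mem : e1 ∈ MonE := by
        rw [he1]
        rw [hMonE, Finset.mem_erase]
        constructor
        · intro hcon
          have := congrFun hcon ⟨0, by omega⟩
          rw [Pi.single_eq_same, helastdef, Pi.single_eq_of_ne hlst0] at this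
          exact one_ne_zero this
        · rw [hmem]
          refine ⟨⟨0, by omega⟩, by simp, ?_⟩
          intro i hi
          exact absurd hi (by simp [Fin.lt_def])
      rcases eq_or_ne j ⟨0, by omega⟩ with rfl | hj0
      · exact hrange _ he1mem
      · have huj : (e1 + Pi.single j 1) ∈ MonE := by
          rw [he1]
          rw [hMonE, Finset.mem_erase]
          constructor
          · intro hcon
            have := congrFun hcon ⟨0, by omega⟩
            rw [Pi.add_apply, Pi.single_eq_same, Pi.single_eq_of_ne (Ne.symm hj0),
              helastdef, Pi.single_eq_of_ne hlst0, add_zero] at this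
            exact one_ne_zero this
          · rw [hmem]
            refine ⟨⟨0, by omega⟩, ?_, ?_⟩
            · rw [Pi.add_apply, Pi.single_eq_same, Pi.single_eq_of_ne (Ne.symm hj0), add_zero]
            · intro i hi
              exact absurd hi (by simp [Fin.lt_def])
        have h1 := hrange _ huj
        have h2 := hrange _ he1mem
        have h3 : Pi.single j (1:F) = (e1 + Pi.single j 1) - e1 := by
          rw [add_sub_cancel_left]
        rw [h3]
        exact Submodule.sub_mem _ h1 h2
    intro w
    have hw : w = ∑ j, w j • (Pi.single j 1 : Fin m → F) := by
      funext j'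
      rw [Finset.sum_apply]
      rw [Finset.sum_eq_single j']
      · rw [Pi.smul_apply, Pi.single_eq_same, smul_eq_mul, mul_one]
      · intro b _ hb
        rw [Pi.smul_apply, Pi.single_eq_of_ne (Ne.symm hb), smul_eq_mul, mul_zero]
      · intro hmm
        exact absurd (mem_univ _) hmm
    have : w ∈ LinearMap.range Hl := by
      rw [hw]
      exact Submodule.sum_mem _ (fun j _ => Submodule.smul_mem _ _ (hmem1 j))
    obtain ⟨x, hx⟩ := this
    exact ⟨x, hx⟩
  -- the translate set
  obtain ⟨T₀, -, hT₀card⟩ : ∃ T₀ : Finset F, T₀ ⊆ univ ∧ T₀.card = lam := by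
    refine Finset.exists_subset_card_eq ?_
    rw [Finset.card_univ, hq]
    exact hlamq
  set Tset : Finset (Fin m → F) := T₀.image (fun t => t • elast) with hTset
  have hTcard : Tset.card = lam := by
    rw [hTset, Finset.card_image_of_injective _ ?_, hT₀card]
    intro t t' htt
    have := congrFun htt lst
    simpa [helastdef, Pi.single_eq_same] using this
  have hTline : ∀ u ∈ Tset, ∃ t : F, u = t • elast := by
    intro u hu
    rw [hTset, Finset.mem_image] at hu
    obtain ⟨t, -, ht⟩ := hu
    exact ⟨t, ht.symm⟩
  set C₀ : Finset (Fin n → F) := univ.filter (fun x => Hl x ∈ Tset) with hC₀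
  -- fiber counting
  have hfib0 : ∀ u : Fin m → F, (univ.filter fun x : Fin n → F => Hl x = u).card
      = (univ.filter fun x : Fin n → F => Hl x = 0).card := by
    intro u
    obtain ⟨x₀, hx₀⟩ := hsurj u
    refine Finset.card_bij (fun x _ => x - x₀) ?_ ?_ ?_
    · intro x hx
      rw [Finset.mem_filter] at hx ⊢
      refine ⟨mem_univ _, ?_⟩
      rw [map_sub, hx.2, hx₀, sub_self]
    · intro x hx y hy hxy
      have := congrArg (· + x₀) hxy
      simpa [sub_add_cancel] using this
    · intro y hy
      rw [Finset.mem_filter] at hy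
      refine ⟨y + x₀, ?_, ?_⟩
      · rw [Finset.mem_filter]
        refine ⟨mem_univ _, ?_⟩
        rw [map_add, hy.2, hx₀, zero_add]
      · rw [add_sub_cancel_right]
  have hcardfun : ∀ k : ℕ, Fintype.card (Fin k → F) = q ^ k := by
    intro k
    rw [Fintype.card_pi]
    simp [hq]
  have hpart : (univ.filter fun x : Fin n → F => Hl x = 0).card * q ^ m = q ^ n := by
    have hsum : ∑ u : Fin m → F, (univ.filter fun x : Fin n → F => Hl x = u).card
        = (univ : Finset (Fin n → F)).card :=
      (Finset.card_eq_sum_card_fiberwise (fun x _ => mem_univ (Hl x))).symm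
    rw [Finset.sum_congr rfl (fun u _ => hfib0 u), Finset.sum_const, Finset.card_univ,
      Finset.card_univ, smul_eq_mul, hcardfun m, hcardfun n] at hsum
    rw [mul_comm] at hsum
    exact hsum
  have hC₀card : C₀.card * q ^ m = lam * q ^ n := by
    have h1 : C₀.card = ∑ u ∈ Tset, (C₀.filter fun x => Hl x = u).card :=
      Finset.card_eq_sum_card_fiberwise (fun x hx => (Finset.mem_filter.mp hx).2)
    have h2 : ∀ u ∈ Tset, (C₀.filter fun x => Hl x = u).card
        = (univ.filter fun x : Fin n → F => Hl x = 0).card := by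
      intro u hu
      rw [← hfib0 u]
      congr 1
      rw [hC₀, Finset.filter_filter]
      refine Finset.filter_congr ?_
      intro x _
      constructor
      · rintro ⟨-, h⟩
        exact h
      · intro hx
        exact ⟨by rw [hx]; exact hu, hx⟩
    rw [h1, Finset.sum_congr rfl h2, Finset.sum_const, smul_eq_mul] at *
    rw [h1, hTcard, mul_assoc, hpart]
  -- support lemmas
  have hsupp1 : ∀ z : Fin n → F, hammingNorm z = 1 →
      ∃ i, z i ≠ 0 ∧ ∀ j, j ≠ i → z j = 0 := by
    intro z hz
    rw [hammingNorm] at hz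
    obtain ⟨i, hi⟩ := Finset.card_eq_one.mp hz
    refine ⟨i, ?_, ?_⟩
    · have : i ∈ ({j | z j ≠ 0} : Finset (Fin n)) := by rw [hi]; simp
      simpa using this
    · intro j hj
      by_contra hj0
      have : j ∈ ({j | z j ≠ 0} : Finset (Fin n)) := by simpa using hj0
      rw [hi] at this
      simp only [Finset.mem_singleton] at this
      exact hj this
  have hsupp2 : ∀ z : Fin n → F, hammingNorm z = 2 →
      ∃ i j, i ≠ j ∧ z i ≠ 0 ∧ z j ≠ 0 ∧ ∀ k, k ≠ i → k ≠ j → z k = 0 := by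
    intro z hz
    rw [hammingNorm] at hz
    obtain ⟨i, j, hij, hset⟩ := Finset.card_eq_two.mp hz
    have hiz : z i ≠ 0 := by
      have : i ∈ ({k | z k ≠ 0} : Finset (Fin n)) := by rw [hset]; simp
      simpa using this
    have hjz : z j ≠ 0 := by
      have : j ∈ ({k | z k ≠ 0} : Finset (Fin n)) := by rw [hset]; simp
      simpa using this
    refine ⟨i, j, hij, hiz, hjz, ?_⟩
    intro k hki hkj
    by_contra hk0
    have : k ∈ ({k | z k ≠ 0} : Finset (Fin n)) := by simpa using hk0
    rw [hset] at this
    simp only [Finset.mem_insert, Finset.mem_singleton] at this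
    rcases this with h | h
    · exact hki h
    · exact hkj h
  -- scaling transfer
  have hprop : ∀ (i : Fin n) (a b : F) (r : Fin m → F), r ∈ Mon → a ≠ 0 →
      a • h i = b • r → h i = r := by
    intro i a b r hr ha heq
    have hh : h i = (a⁻¹ * b) • r := by
      calc h i = a⁻¹ • (a • h i) := by rw [smul_smul, inv_mul_cancel₀ ha, one_smul]
        _ = a⁻¹ • (b • r) := by rw [heq]
        _ = (a⁻¹ * b) • r := by rw [smul_smul]
    exact L1 _ (hhMon i) _ hr _ hh
  -- weight-1 value of Hl
  have hHl1 : ∀ (z : Fin n → F) (i : Fin n), (∀ j, j ≠ i → z j = 0) →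
      Hl z = z i • h i := by
    intro z i hrest
    rw [hHlapply]
    rw [Finset.sum_eq_single i]
    · intro j _ hj
      rw [hrest j hj, zero_smul]
    · intro hmm
      exact absurd (mem_univ _) hmm
  -- no small-weight kernel vectors
  have hkerlow : ∀ z : Fin n → F, Hl z = 0 → hammingNorm z ≤ 2 → z = 0 := by
    intro z hz hw
    by_contra hz0
    have h0 : hammingNorm z ≠ 0 := fun hcon => hz0 (hammingNorm_eq_zero.mp hcon)
    rcases (by omega : hammingNorm z = 1 ∨ hammingNorm z = 2) with h1 | h2
    · obtain ⟨i, hi, hrest⟩ := hsupp1 z h1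
      have := hHl1 z i hrest
      rw [hz] at this
      rcases smul_eq_zero.mp this.symm with h | h
      · exact hi h
      · exact hh0 i h
    · obtain ⟨i, j, hij, hi, hj, hrest⟩ := hsupp2 z h2
      have hsum : Hl z = z i • h i + z j • h j := by
        rw [hHlapply]
        rw [← Finset.sum_subset (Finset.subset_univ ({i, j} : Finset (Fin n)))]
        · rw [Finset.sum_pair hij]
        · intro k _ hk
          simp only [Finset.mem_insert, Finset.mem_singleton, not_or] at hk
          rw [hrest k hk.1 hk.2, zero_smul]
      rw [hz] at hsum
      have heq : z i • h i = (-(z j)) • h j := by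
        rw [neg_smul]
        exact eq_neg_of_add_eq_zero_left hsum.symm
      have := hprop i (z i) (-(z j)) (h j) (hhMon j) hi heq
      exact hij (hhinj this)
  -- minimum distance
  have hdist : ∀ x ∈ C₀, ∀ y ∈ C₀, x ≠ y → 2 ≤ hammingDist x y := by
    intro x hx y hy hxy
    by_contra hlt
    push_neg at hlt
    have hdpos : 0 < hammingDist x y := hammingDist_pos.mpr hxy
    have hz1 : hammingNorm (x - y) = 1 := by
      have hh := hammingDist_eq_hammingNorm_sub' x y
      omega
    obtain ⟨i, hi, hrest⟩ := hsupp1 _ hz1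
    have hHz := hHl1 _ i hrest
    obtain ⟨t, ht⟩ := hTline _ (Finset.mem_filter.mp hx).2
    obtain ⟨t', ht'⟩ := hTline _ (Finset.mem_filter.mp hy).2
    have heq : (x - y) i • h i = (t - t') • elast := by
      rw [← hHz, map_sub, ht, ht', sub_smul]
    rcases eq_or_ne t t' with rfl | htt
    · rw [sub_self, zero_smul] at heq
      rcases smul_eq_zero.mp heq with hcase | hcase
      · exact hi hcase
      · exact hh0 i hcase
    · exact hhne i (hprop i _ _ elast helast hi heq)
  -- coverage
  have hcov : ∀ v : Fin n → F, (C₀.filter (fun c => hammingDist v c ≤ 1)).card ≤ lam := by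
    intro v
    rw [← hTcard]
    refine Finset.card_le_card_of_injOn (fun c => Hl c) ?_ ?_
    · intro c hc
      exact (Finset.mem_filter.mp (Finset.mem_filter.mp hc).1).2
    · intro c hc c' hc' hcc
      simp only [Finset.coe_filter, Set.mem_setOf_eq] at hc hc'
      have hcc' : Hl c = Hl c' := hcc
      have hz0 : Hl (c - c') = 0 := by rw [map_sub, hcc', sub_self]
      have hwt : hammingNorm (c - c') ≤ 2 := by
        have h1 : hammingDist c c' ≤ hammingDist c v + hammingDist v c' :=
          hammingDist_triangle c v c'
        have h2 : hammingDist c v = hammingDist v c := hammingDist_comm c v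
        have h3 := hammingDist_eq_hammingNorm_sub' c c'
        have h4 := hc.2
        have h5 := hc'.2
        omega
      have := hkerlow _ hz0 hwt
      exact sub_eq_zero.mp this
  exact ⟨C₀, hdist, hcov, hC₀card⟩

/-- The maximum size of a λ-fold 1-packing with minimum distance ≥ 2 in
H((qᵐ−q)/(q−1), q), λ ≤ q, is exactly λqⁿ/(nq−n+q). -/
theorem stmt_11 (q m n lam : ℕ) (hq : IsPrimePow q) (hm : 2 ≤ m)
    (hn : n * (q - 1) = q ^ m - q) (hlam1 : 1 ≤ lam) (hlamq : lam ≤ q) :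
    IsGreatest {s : ℚ | ∃ C : Finset (Fin n → Fin q),
        (∀ x ∈ C, ∀ y ∈ C, x ≠ y → 2 ≤ hammingDist x y) ∧
        (∀ v : Fin n → Fin q,
          (C.filter (fun c => hammingDist v c ≤ 1)).card ≤ lam) ∧
        s = C.card}
      ((lam : ℚ) * q ^ n / (n * q - n + q)) := by
  classical
  have hq2 : 2 ≤ q := hq.two_le
  -- basic arithmetic
  have hqm : q ≤ q ^ m := Nat.le_self_pow (by omega) q
  have hqq : q * q ≤ q ^ m := by
    calc q * q = q ^ 2 := (sq q).symm
      _ ≤ q ^ m := Nat.pow_le_pow_right (by omega) hm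
  have hmul : n * q = n * (q - 1) + n := by
    have hq1 : q - 1 + 1 = q := by omega
    calc n * q = n * ((q - 1) + 1) := by rw [hq1]
      _ = n * (q - 1) + n := by ring
  have hQ : n * q + q = q ^ m + n := by omega
  have hn1 : 1 ≤ n := by
    rcases Nat.eq_zero_or_pos n with h0 | h1
    · subst h0
      simp only [zero_mul] at hn
      have h2q : 2 * q ≤ q * q := by nlinarith
      omega
    · exact h1
  have hden : ((n : ℚ) * q - n + q) = (q : ℚ) ^ m := by
    have h0 : (n : ℚ) * q + q = (q : ℚ) ^ m + n := by exact_mod_cast hQ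
    linarith
  have hqmpos : (0 : ℚ) < (q : ℚ) ^ m := by positivity
  constructor
  · -- membership: the construction
    obtain ⟨p, k, hp, hk, hpk⟩ := hq
    haveI : Fact p.Prime := ⟨Nat.prime_iff.mpr hp⟩
    haveI : Fintype (GaloisField p k) := Fintype.ofFinite _
    have hcardF : Fintype.card (GaloisField p k) = q := by
      rw [← Nat.card_eq_fintype_card, GaloisField.card p k (by omega), hpk]
    obtain ⟨C₀, hd₀, hcov₀, hcard₀⟩ :=
      construction (F := GaloisField p k) hcardF hq2 hm hQ hlam1 hlamq
    have e : GaloisField p k ≃ Fin q := Fintype.equivFinOfCardEq hcardF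
    set toFq : (Fin n → GaloisField p k) → (Fin n → Fin q) := fun c i => e (c i) with htoFq
    have htoinj : Function.Injective toFq :=
      fun a b hab => funext fun i => e.injective (congrFun hab i)
    have hdistpres : ∀ a b : Fin n → GaloisField p k,
        hammingDist (toFq a) (toFq b) = hammingDist a b := by
      intro a b
      exact hammingDist_comp (fun _ => e) (fun _ => e.injective)
    refine ⟨C₀.image toFq, ?_, ?_, ?_⟩
    · intro x hx y hy hxy
      obtain ⟨a, ha, rfl⟩ := Finset.mem_image.mp hx
      obtain ⟨b, hb, rfl⟩ := Finset.mem_image.mp hy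
      have hab : a ≠ b := fun hcon => hxy (by rw [hcon])
      have := hd₀ a ha b hb hab
      rwa [← hdistpres a b] at this
    · intro v
      set v' : Fin n → GaloisField p k := fun i => e.symm (v i) with hv'
      have hv : v = toFq v' := funext fun i => (e.apply_symm_apply (v i)).symm
      rw [Finset.filter_image]
      rw [Finset.card_image_of_injective _ htoinj]
      have : (C₀.filter fun a => hammingDist v (toFq a) ≤ 1)
          = (C₀.filter fun a => hammingDist v' a ≤ 1) := by
        refine Finset.filter_congr ?_
        intro c _
        rw [hv, hdistpres v' c]
      rw [this]
      exact hcov₀ v'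
    · rw [Finset.card_image_of_injective _ htoinj]
      have hcast : (C₀.card : ℚ) * (q : ℚ) ^ m = (lam : ℚ) * (q : ℚ) ^ n := by
        exact_mod_cast hcard₀
      rw [hden]
      rw [div_eq_iff (ne_of_gt hqmpos)]
      linarith
  · -- upper bound
    rintro s ⟨C, hdC, hcovC, rfl⟩
    haveI : NeZero q := ⟨by omega⟩
    have e2 : Fin q ≃ ZMod q := Fintype.equivOfCardEq (by simp [ZMod.card])
    set toZ : (Fin n → Fin q) → (Fin n → ZMod q) := fun c i => e2 (c i) with htoZ
    have htoinj : Function.Injective toZ :=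
      fun a b hab => funext fun i => e2.injective (congrFun hab i)
    have hdistpres : ∀ a b : Fin n → Fin q,
        hammingDist (toZ a) (toZ b) = hammingDist a b := by
      intro a b
      exact hammingDist_comp (fun _ => e2) (fun _ => e2.injective)
    have hdZ : ∀ x ∈ C.image toZ, ∀ y ∈ C.image toZ, x ≠ y → 2 ≤ hammingDist x y := by
      intro x hx y hy hxy
      obtain ⟨a, ha, rfl⟩ := Finset.mem_image.mp hx
      obtain ⟨b, hb, rfl⟩ := Finset.mem_image.mp hy
      have hab : a ≠ b := fun hcon => hxy (by rw [hcon])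
      have := hdC a ha b hb hab
      rwa [← hdistpres a b] at this
    have hcovZ : ∀ v : Fin n → ZMod q,
        ((C.image toZ).filter (fun c => hammingDist v c ≤ 1)).card ≤ lam := by
      intro v
      set v' : Fin n → Fin q := fun i => e2.symm (v i) with hv'
      have hv : v = toZ v' := funext fun i => (e2.apply_symm_apply (v i)).symm
      rw [Finset.filter_image]
      rw [Finset.card_image_of_injective _ htoinj]
      have : (C.filter fun a => hammingDist v (toZ a) ≤ 1)
          = (C.filter fun a => hammingDist v' a ≤ 1) := by
        refine Finset.filter_congr ?_
        intro c _
        rw [hv, hdistpres v' c]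
      rw [this]
      exact hcovC v'
    have hmain := upper_bound_zmod hq2 hm hQ hn1 hlam1 (C.image toZ) hdZ hcovZ
    rw [Finset.card_image_of_injective _ htoinj] at hmain
    rw [hden, le_div_iff₀ hqmpos]
    exact_mod_cast hmain
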